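/- Let Q be a finite quiver with exactly one arrow α : b → c where b ≠ c, and dimension vector d with d_b, d_c ≥ 1 (other vertices arbitrary). Then the moment map Φ(ρ)_a = √(-1)λ_a·id for a ∉ {b,c}, Φ(ρ)_b = √(-1)(λ_b·id − ρ*ρ), Φ(ρ)_c = √(-1)(λ_c·id + ρρ*), defined on 𝒜 = Hom(ℂ^{d_b}, ℂ^{d_c}), is proper. -/

import Mathlib

open Matrix

/-- The moment map `Φ_θ` for the action of `K = Π_a U(d_a)` on the representation space
`𝒜 = ⊕_α Hom(ℂ^{d(s α)}, ℂ^{d(t α)})` of a quiver, with `Lie(K)*` identified with the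
space of tuples of matrices via the trace inner product:
`Φ(ρ)_a = √-1 (λ_a·id + Σ_{t α = a} ρ_α ρ_α* − Σ_{s α = a} ρ_α* ρ_α)`. -/
noncomputable def quiverMomentMap {Q0 Q1 : Type} [Fintype Q1] [DecidableEq Q0]
    (s t : Q1 → Q0) (d : Q0 → ℕ) (lam : Q0 → ℝ)
    (ρ : ∀ α : Q1, Matrix (Fin (d (t α))) (Fin (d (s α))) ℂ) (a : Q0) :
    Matrix (Fin (d a)) (Fin (d a)) ℂ :=
  Complex.I • ((lam a : ℂ) • (1 : Matrix (Fin (d a)) (Fin (d a)) ℂ)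
    + (∑ α : Q1, if h : t α = a then h ▸ (ρ α * (ρ α)ᴴ) else 0)
    - (∑ α : Q1, if h : s α = a then h ▸ ((ρ α)ᴴ * ρ α) else 0))

/-- Base case of the induction: for a finite quiver with exactly one arrow `α : b → c`
(`b ≠ c`, `d_b, d_c ≥ 1`), the moment map
`Φ(ρ)_a = √-1 λ_a·id` for `a ∉ {b,c}`, `Φ(ρ)_b = √-1(λ_b·id − ρ*ρ)`,
`Φ(ρ)_c = √-1(λ_c·id + ρρ*)`, defined on `𝒜 = Hom(ℂ^{d_b}, ℂ^{d_c})`, is proper. -/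
theorem moment_map_proper_single_arrow {Q0 : Type} [Fintype Q0] [DecidableEq Q0]
    (b c : Q0) (hbc : b ≠ c) (d : Q0 → ℕ) (hdb : 1 ≤ d b) (hdc : 1 ≤ d c)
    (lam : Q0 → ℝ) :
    ∀ K : Set (∀ a : Q0, Matrix (Fin (d a)) (Fin (d a)) ℂ), IsCompact K →
      IsCompact
        (quiverMomentMap (fun _ : Unit => b) (fun _ : Unit => c) d lam ⁻¹' K) := by
  intro K hK
  set Φ := quiverMomentMap (fun _ : Unit => b) (fun _ : Unit => c) d lam with hΦ
  have hcont : Continuous Φ := by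
    apply continuous_pi
    intro a
    unfold Φ
    unfold quiverMomentMap
    apply Continuous.fun_const_smul
    apply Continuous.sub
    · apply Continuous.add continuous_const
      apply continuous_finset_sum
      intro α _
      by_cases h : c = a
      · subst h
        simp only [dif_pos]
        exact (continuous_apply α).matrix_mul (continuous_apply α).matrix_conjTranspose
      · simp only [dif_neg h]; exact continuous_const
    · apply continuous_finset_sum
      intro α _
      by_cases h : b = a
      · subst h
        simp only [dif_pos]
        exact (continuous_apply α).matrix_conjTranspose.matrix_mul (continuous_apply α)
      · simp only [dif_neg h]; exact continuous_const
  obtain ⟨M, hM⟩ : ∃ M : ℝ, ∀ x ∈ K, ∀ i : Fin (d c), ‖x c i i‖ ≤ M := by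
    have hcf : Continuous fun x : (∀ a : Q0, Matrix (Fin (d a)) (Fin (d a)) ℂ) =>
        ∑ i : Fin (d c), ‖x c i i‖ := by
      apply continuous_finset_sum
      intro i _
      exact continuous_norm.comp ((continuous_apply c).matrix_elem i i)
    obtain ⟨M, hM⟩ := (hK.image hcf).bddAbove
    refine ⟨M, fun x hx i => ?_⟩
    calc ‖x c i i‖
        ≤ ∑ j : Fin (d c), ‖x c j j‖ :=
          Finset.single_le_sum (f := fun j : Fin (d c) => ‖x c j j‖)
            (fun j _ => norm_nonneg _) (Finset.mem_univ i)
      _ ≤ M := hM ⟨x, hx, rfl⟩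
  set C := Real.sqrt (M + |lam c|) with hC
  set S : Set (∀ α : Unit, Matrix (Fin (d ((fun _ : Unit => c) α)))
      (Fin (d ((fun _ : Unit => b) α))) ℂ) :=
    Set.univ.pi fun _ : Unit => Set.univ.pi fun _ : Fin (d c) =>
      Set.univ.pi fun _ : Fin (d b) => Metric.closedBall (0 : ℂ) C with hS
  have hScomp : IsCompact S :=
    isCompact_univ_pi fun _ => isCompact_univ_pi fun _ => isCompact_univ_pi fun _ =>
      isCompact_closedBall 0 C
  have hsub : Φ ⁻¹' K ⊆ S := by
    intro ρ hρ
    have key : ∀ i : Fin (d c), ∀ j : Fin (d b), Complex.normSq (ρ () i j) ≤ M + |lam c| := by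
      intro i j
      have hval : Φ ρ c i i = Complex.I * ((lam c : ℂ) +
          (∑ k : Fin (d b), (Complex.normSq (ρ () i k) : ℂ))) := by
        unfold Φ
        unfold quiverMomentMap
        simp [Matrix.smul_apply, Matrix.add_apply, Matrix.sub_apply, Matrix.sum_apply,
          Matrix.one_apply, dif_neg hbc, Matrix.mul_apply, Matrix.conjTranspose_apply,
          Complex.mul_conj]
      have habs : ‖Φ ρ c i i‖ =
          |lam c + ∑ k : Fin (d b), Complex.normSq (ρ () i k)| := by
        rw [hval, norm_mul, Complex.norm_I, one_mul, ← Complex.ofReal_sum,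
          ← Complex.ofReal_add, Complex.norm_real, Real.norm_eq_abs]
      have hmem : Φ ρ ∈ K := hρ
      have h1 : |lam c + ∑ k : Fin (d b), Complex.normSq (ρ () i k)| ≤ M := by
        rw [← habs]; exact hM _ hmem i
      have h2 : Complex.normSq (ρ () i j) ≤ ∑ k : Fin (d b), Complex.normSq (ρ () i k) :=
        Finset.single_le_sum (f := fun k => Complex.normSq (ρ () i k))
          (fun k _ => Complex.normSq_nonneg _) (Finset.mem_univ j)
      have h3 : (∑ k : Fin (d b), Complex.normSq (ρ () i k)) ≤
          |lam c + ∑ k : Fin (d b), Complex.normSq (ρ () i k)| + |lam c| := by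
        have ha := le_abs_self (lam c + ∑ k : Fin (d b), Complex.normSq (ρ () i k))
        have hb := neg_abs_le (lam c)
        linarith
      linarith
    intro α _
    intro i _
    intro j _
    simp only [Metric.mem_closedBall, dist_zero_right]
    rw [Complex.norm_def, hC]
    exact Real.sqrt_le_sqrt (key i j)
  exact hScomp.of_isClosed_subset (hK.isClosed.preimage hcont) hsub
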